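/- arXiv:2207.04321 — 2 statements merged into one kernel-verified Lean document; each statement's English description precedes it below -/
import Mathlib

section
/- Let G=(V,E) be a strongly biconnected directed graph on a finite vertex set with n = |V| vertices. Then there exists a spanning subgraph (V,H) with H ⊆ E such that (V,H) is strongly biconnected and |H| ≤ 3(n-1). -/
/-- Directed reachability: there is a directed path from `u` to `v`
using edges of `H`. -/
def DPath {V : Type*} (H : Finset (V × V)) (u v : V) : Prop :=
  Relation.ReflTransGen (fun a b => (a, b) ∈ H) u v

/-- A directed graph (given by its edge set `H ⊆ V × V`) is strongly connected
if every vertex reaches every other vertex by a directed path. -/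
def StronglyConnected {V : Type*} (H : Finset (V × V)) : Prop :=
  ∀ u v : V, DPath H u v

/-- The underlying undirected simple graph of a directed graph: `u ~ w` (for `u ≠ w`)
whenever `(u,w)` or `(w,u)` is a directed edge. -/
def underlying {V : Type*} (H : Finset (V × V)) : SimpleGraph V where
  Adj u w := u ≠ w ∧ ((u, w) ∈ H ∨ (w, u) ∈ H)
  symm := ⟨fun u w ⟨h1, h2⟩ => ⟨h1.symm, h2.symm⟩⟩
  loopless := ⟨fun v h => h.1 rfl⟩

/-- `a` is an articulation point of the undirected graph `G` if deleting `a`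
(and its incident edges) leaves a graph that is not connected. -/
def IsArticulationPoint {V : Type*} (G : SimpleGraph V) (a : V) : Prop :=
  ¬ (G.induce {v : V | v ≠ a}).Connected

/-- An undirected graph is 2-vertex-connected if it is connected and has
no articulation point. -/
def TwoVertexConnected {V : Type*} (G : SimpleGraph V) : Prop :=
  G.Connected ∧ ∀ a : V, ¬ IsArticulationPoint G a

/-- A directed graph is strongly biconnected if it is strongly connected and
its underlying undirected graph has no articulation point. -/
def StronglyBiconnected {V : Type*} (H : Finset (V × V)) : Prop :=
  StronglyConnected H ∧ ∀ a : V, ¬ IsArticulationPoint (underlying H) a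

open Relation Function

namespace SBAux

variable {V : Type*}

lemma induce_adj' {G : SimpleGraph V} {s : Set V} {u w : s} :
    (G.induce s).Adj u w ↔ G.Adj u w := by
  simp [SimpleGraph.comap]

lemma dpath_mono {H H' : Finset (V × V)} (hs : H ⊆ H') {u v : V} (h : DPath H u v) :
    DPath H' u v :=
  Relation.ReflTransGen.mono (fun a b hab => hs hab) _ _ h

lemma first_exit {H : Finset (V × V)} {S : Set V} {u w : V} (h : DPath H u w)
    (hu : u ∈ S) (hw : w ∉ S) : ∃ a b, a ∈ S ∧ b ∉ S ∧ (a, b) ∈ H := by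
  induction h with
  | refl => exact absurd hu hw
  | tail hp hstep ih =>
    rename_i b c
    by_cases hb : b ∈ S
    · exact ⟨b, c, hb, hw, hstep⟩
    · exact ih hb

lemma reachable_underlying {H : Finset (V × V)} {u v : V} (h : DPath H u v) :
    (underlying H).Reachable u v := by
  induction h with
  | refl => exact SimpleGraph.Reachable.refl _
  | tail hp hstep ih =>
    rename_i b c
    by_cases hbc : b = c
    · exact hbc ▸ ih
    · exact ih.trans (SimpleGraph.Adj.reachable ⟨hbc, Or.inl hstep⟩)

lemma exists_outtree [Fintype V] (E : Finset (V × V)) (hsc : StronglyConnected E) (r : V) :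
    ∃ T ⊆ E, T.card + 1 ≤ Fintype.card V ∧ ∀ v, DPath T r v := by
  have key : ∀ k, k ≤ Fintype.card V →
      ∃ T ⊆ E, ∃ S : Finset V, r ∈ S ∧ (∀ v ∈ S, DPath T r v) ∧
        T.card + 1 ≤ S.card ∧ k ≤ S.card := by
    classical
    intro k hk
    induction k with
    | zero =>
      exact ⟨∅, Finset.empty_subset _, {r}, Finset.mem_singleton_self r,
        fun v hv => by rw [Finset.mem_singleton] at hv; exact hv ▸ Relation.ReflTransGen.refl,
        by simp, by simp⟩
    | succ k ih =>
      obtain ⟨T, hTE, S, hrS, hreach, hcard, hkS⟩ := ih (Nat.le_of_succ_le hk)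
      by_cases hkS' : k + 1 ≤ S.card
      · exact ⟨T, hTE, S, hrS, hreach, hcard, hkS'⟩
      · -- S.card = k < Fintype.card V, so S ≠ univ
        have hSlt : S.card < Fintype.card V := by omega
        have : ∃ w, w ∉ S := by
          by_contra hall
          push_neg at hall
          have : (Finset.univ : Finset V) ⊆ S := fun x _ => hall x
          have := Finset.card_le_card this
          simp at this
          omega
        obtain ⟨w, hw⟩ := this
        obtain ⟨a, b, haS, hbS, hab⟩ := first_exit (S := (S : Set V)) (hsc r w)
          (by exact_mod_cast hrS) (by exact_mod_cast hw)
        refine ⟨insert (a, b) T, ?_, insert b S, Finset.mem_insert_of_mem hrS, ?_, ?_, ?_⟩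
        · exact Finset.insert_subset hab hTE
        · intro v hv
          rcases Finset.mem_insert.mp hv with h | h
          · subst h
            exact Relation.ReflTransGen.tail
              (dpath_mono (Finset.subset_insert _ _) (hreach a (by exact_mod_cast haS)))
              (Finset.mem_insert_self _ _)
          · exact dpath_mono (Finset.subset_insert _ _) (hreach v h)
        · have h1 := Finset.card_insert_le (a, b) T
          have h2 : (insert b S).card = S.card + 1 :=
            Finset.card_insert_of_notMem (by exact_mod_cast hbS)
          omega
        · have h2 : (insert b S).card = S.card + 1 :=
            Finset.card_insert_of_notMem (by exact_mod_cast hbS)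
          omega
  obtain ⟨T, hTE, S, hrS, hreach, hcard, hkS⟩ := key (Fintype.card V) le_rfl
  have hS : S = Finset.univ := Finset.eq_univ_of_card S (le_antisymm (Finset.card_le_univ S) (by simpa using hkS))
  have hSc : S.card = Fintype.card V := by rw [hS]; simp
  exact ⟨T, hTE, by omega, fun v => hreach v (hS ▸ Finset.mem_univ v)⟩

lemma exists_intree [Fintype V] (E : Finset (V × V)) (hsc : StronglyConnected E) (r : V) :
    ∃ T ⊆ E, T.card + 1 ≤ Fintype.card V ∧ ∀ v, DPath T v r := by
  classical
  set E' : Finset (V × V) := E.image Prod.swap with hE'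
  have hmem : ∀ p : V × V, p ∈ E' ↔ (p.2, p.1) ∈ E := by
    intro p
    simp only [hE', Finset.mem_image]
    constructor
    · rintro ⟨q, hq, rfl⟩; simpa using hq
    · intro h; exact ⟨(p.2, p.1), h, rfl⟩
  have hsc' : StronglyConnected E' := by
    intro u v
    have := hsc v u
    unfold DPath at this ⊢
    rw [← reflTransGen_swap]
    exact Relation.ReflTransGen.mono (fun a b hab => show (b, a) ∈ E' from (hmem (b, a)).mpr hab) _ _ this
  obtain ⟨T', hT'E, hcard, hreach⟩ := exists_outtree E' hsc' r
  refine ⟨T'.image Prod.swap, ?_, ?_, ?_⟩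
  · intro p hp
    simp only [Finset.mem_image] at hp
    obtain ⟨q, hq, rfl⟩ := hp
    have := hT'E hq
    rw [hmem] at this
    exact this
  · calc (T'.image Prod.swap).card + 1 ≤ T'.card + 1 := by
          have := Finset.card_image_le (f := Prod.swap) (s := T')
          omega
      _ ≤ Fintype.card V := hcard
  · intro v
    have := hreach v
    unfold DPath at this ⊢
    rw [← reflTransGen_swap] at this
    exact Relation.ReflTransGen.mono (fun a b hab => by
      simp only [Finset.mem_image]
      exact ⟨(b, a), hab, rfl⟩) _ _ this



/-- The graph obtained from `underlying H` by deleting vertex `a`. -/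
abbrev delG (H : Finset (V × V)) (a : V) : SimpleGraph {v : V | v ≠ a} :=
  (underlying H).induce {v : V | v ≠ a}

/-- Number of connected components of `underlying H` minus the vertex `a`. -/
noncomputable def ncomp (H : Finset (V × V)) (a : V) : ℕ :=
  Nat.card (delG H a).ConnectedComponent

lemma adj_mono {H H' : Finset (V × V)} (hs : H ⊆ H') {u w : V}
    (h : (underlying H).Adj u w) : (underlying H').Adj u w :=
  ⟨h.1, h.2.imp (fun x => hs x) (fun x => hs x)⟩

/-- The inclusion homomorphism between deleted graphs. -/
def delHom {H H' : Finset (V × V)} (hs : H ⊆ H') (a : V) : delG H a →g delG H' a where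
  toFun := id
  map_rel' := by
    intro u w h
    rw [induce_adj'] at h ⊢
    exact adj_mono hs h

lemma delHom_surj {H H' : Finset (V × V)} (hs : H ⊆ H') (a : V) :
    Surjective (SimpleGraph.ConnectedComponent.map (delHom hs a)) := by
  intro C
  obtain ⟨v, rfl⟩ := C.exists_rep
  exact ⟨(delG H a).connectedComponentMk v, rfl⟩

lemma ncomp_mono [Finite V] {H H' : Finset (V × V)} (hs : H ⊆ H') (a : V) :
    ncomp H' a ≤ ncomp H a :=
  Nat.card_le_card_of_surjective _ (delHom_surj hs a)

lemma ncomp_lt [Finite V] {H H' : Finset (V × V)} (hs : H ⊆ H') (a : V)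
    {x y : {v : V | v ≠ a}}
    (hne : (delG H a).connectedComponentMk x ≠ (delG H a).connectedComponentMk y)
    (heq : (delG H' a).connectedComponentMk x = (delG H' a).connectedComponentMk y) :
    ncomp H' a < ncomp H a := by
  have : Finite ((delG H a).ConnectedComponent) := Quot.finite _
  have : Finite ((delG H' a).ConnectedComponent) := Quot.finite _
  have hFa := Fintype.ofFinite ((delG H a).ConnectedComponent)
  have hFa' := Fintype.ofFinite ((delG H' a).ConnectedComponent)
  rw [ncomp, ncomp, Nat.card_eq_fintype_card, Nat.card_eq_fintype_card]
  refine Fintype.card_lt_of_surjective_not_injective _ (delHom_surj hs a) ?_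
  intro hinj
  exact hne (hinj (by rw [SimpleGraph.ConnectedComponent.map_mk, SimpleGraph.ConnectedComponent.map_mk]; exact heq))

lemma ncomp_pos [Finite V] (H : Finset (V × V)) (a : V)
    (hne : Nonempty {v : V | v ≠ a}) : 0 < ncomp H a := by
  have : Finite ((delG H a).ConnectedComponent) := Quot.finite _
  have : Nonempty ((delG H a).ConnectedComponent) :=
    ⟨(delG H a).connectedComponentMk hne.some⟩
  exact Nat.card_pos

/-- In a preconnected graph `G`, every vertex `v ≠ a` is in the same component
of `G - a` as some neighbor of `a`. -/
lemma exists_adj_same_comp_aux {G : SimpleGraph V} (a : V) :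
    ∀ {v b : V} (_ : G.Walk v b) (_ : a = b) (hv : v ≠ a),
    ∃ u : V, G.Adj a u ∧ ∃ hu : u ≠ a,
      (G.induce {x : V | x ≠ a}).connectedComponentMk ⟨v, hv⟩
        = (G.induce {x : V | x ≠ a}).connectedComponentMk ⟨u, hu⟩ := by
  intro v b p
  induction p with
  | nil => intro hb hv; exact absurd hb.symm hv
  | @cons x w b h p ih =>
    intro hb hv
    subst hb
    by_cases hw : w = a
    · subst hw
      exact ⟨x, h.symm, hv, rfl⟩
    · obtain ⟨u, hadj, hu, hcomp⟩ := ih rfl hw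
      refine ⟨u, hadj, hu, ?_⟩
      have hadj2 : (G.induce {y : V | y ≠ a}).Adj ⟨x, hv⟩ ⟨w, hw⟩ := by
        rw [induce_adj']; exact h
      rw [SimpleGraph.ConnectedComponent.connectedComponentMk_eq_of_adj hadj2]
      exact hcomp

lemma exists_adj_same_comp {G : SimpleGraph V} (hpre : G.Preconnected) (a : V)
    (v : {x : V | x ≠ a}) :
    ∃ u : V, G.Adj a u ∧ ∃ hu : u ≠ a,
      (G.induce {x : V | x ≠ a}).connectedComponentMk v
        = (G.induce {x : V | x ≠ a}).connectedComponentMk ⟨u, hu⟩ := by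
  obtain ⟨v, hv⟩ := v
  obtain ⟨p⟩ := hpre v a
  exact exists_adj_same_comp_aux a p rfl hv

instance instDecUnderlying [DecidableEq V] (H : Finset (V × V)) :
    DecidableRel (underlying H).Adj := fun u w =>
  inferInstanceAs (Decidable (u ≠ w ∧ ((u, w) ∈ H ∨ (w, u) ∈ H)))

lemma ncomp_le_degree [Fintype V] [DecidableEq V] (T : Finset (V × V))
    (hpre : (underlying T).Preconnected) (a : V) :
    ncomp T a ≤ (underlying T).degree a := by
  classical
  rw [← SimpleGraph.card_neighborSet_eq_degree, ← Nat.card_eq_fintype_card]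
  have hex : ∀ C : (delG T a).ConnectedComponent,
      ∃ u : (underlying T).neighborSet a, ∃ hu : (u : V) ≠ a,
        (delG T a).connectedComponentMk ⟨u, hu⟩ = C := by
    intro C
    obtain ⟨v, rfl⟩ := C.exists_rep
    obtain ⟨u, hadj, hu, hcomp⟩ := exists_adj_same_comp hpre a v
    exact ⟨⟨u, hadj⟩, hu, hcomp.symm⟩
  choose f hf hfc using hex
  refine Nat.card_le_card_of_injective f ?_
  intro C C' hCC'
  rw [← hfc C, ← hfc C']
  have : (f C : V) = (f C' : V) := congrArg Subtype.val hCC'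
  congr 1
  exact Subtype.ext this

lemma underlying_edge_card [Fintype V] [DecidableEq V] (T : Finset (V × V)) :
    (underlying T).edgeFinset.card ≤ T.card := by
  classical
  apply Finset.card_le_card_of_surjOn (fun p : V × V => Sym2.mk p.1 p.2)
  intro e he
  simp only [Finset.mem_coe] at he
  rw [SimpleGraph.mem_edgeFinset] at he
  induction e with
  | _ u w =>
    rw [SimpleGraph.mem_edgeSet] at he
    rcases he.2 with h | h
    · exact ⟨(u, w), h, rfl⟩
    · exact ⟨(w, u), h, Sym2.eq_swap⟩

lemma walk_cross {α : Type*} (G G' : SimpleGraph α) (x : α) :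
    ∀ {u w : α}, G.Walk u w → G'.Reachable x u → ¬ G'.Reachable x w →
    ∃ c d, G.Adj c d ∧ G'.Reachable x c ∧ ¬ G'.Reachable x d := by
  intro u w p
  induction p with
  | nil => intro h h'; exact absurd h h'
  | @cons u v w h p ih =>
    intro hu hw
    by_cases hv : G'.Reachable x v
    · exact ih hv hw
    · exact ⟨u, v, h, hu, hv⟩

lemma step [Fintype V] [DecidableEq V] {E H : Finset (V × V)} (hsub : H ⊆ E) (a : V)
    (hart : IsArticulationPoint (underlying H) a)
    (hnart : ¬ IsArticulationPoint (underlying E) a) :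
    ∃ e ∈ E, ncomp (insert e H) a < ncomp H a := by
  classical
  rw [IsArticulationPoint, not_not] at hnart
  have hEpre := hnart.preconnected
  have hne : Nonempty {v : V | v ≠ a} := hnart.nonempty
  rw [IsArticulationPoint, SimpleGraph.connected_iff] at hart
  push_neg at hart
  have hnpre : ¬ (delG H a).Preconnected := fun hp => (hart hp).false hne.some
  rw [SimpleGraph.Preconnected] at hnpre
  push_neg at hnpre
  obtain ⟨x, y, hxy⟩ := hnpre
  obtain ⟨p⟩ := hEpre x y
  obtain ⟨c, d, hcd, hc, hd⟩ := walk_cross (delG E a) (delG H a) x p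
    (SimpleGraph.Reachable.refl x) hxy
  rw [induce_adj'] at hcd
  have hne_cd : (c : V) ≠ (d : V) := hcd.1
  have hmkne : (delG H a).connectedComponentMk c ≠ (delG H a).connectedComponentMk d := by
    intro h
    exact hd (hc.trans (SimpleGraph.ConnectedComponent.exact h))
  rcases hcd.2 with h | h
  · refine ⟨((c : V), (d : V)), h, ?_⟩
    refine ncomp_lt (Finset.subset_insert _ _) a hmkne ?_
    refine SimpleGraph.ConnectedComponent.connectedComponentMk_eq_of_adj ?_
    rw [induce_adj']
    exact ⟨hne_cd, Or.inl (Finset.mem_insert_self _ _)⟩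
  · refine ⟨((d : V), (c : V)), h, ?_⟩
    refine ncomp_lt (Finset.subset_insert _ _) a hmkne ?_
    refine SimpleGraph.ConnectedComponent.connectedComponentMk_eq_of_adj ?_
    rw [induce_adj']
    exact ⟨hne_cd, Or.inr (Finset.mem_insert_self _ _)⟩

/-- The potential function: total excess of components over all vertex deletions. -/
noncomputable def Phi [Fintype V] (H : Finset (V × V)) : ℕ :=
  ∑ a : V, (ncomp H a - 1)

lemma main_ind [Fintype V] [DecidableEq V] {E : Finset (V × V)}
    (hartE : ∀ a : V, ¬ IsArticulationPoint (underlying E) a)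
    (hV : 2 ≤ Fintype.card V) :
    ∀ k (H : Finset (V × V)), H ⊆ E → Phi H < k →
      H.card + Phi H ≤ 3 * (Fintype.card V - 1) →
      ∃ H', H ⊆ H' ∧ H' ⊆ E ∧ (∀ a : V, ¬ IsArticulationPoint (underlying H') a) ∧
        H'.card ≤ 3 * (Fintype.card V - 1) := by
  classical
  intro k
  induction k with
  | zero => intro H _ h _; exact absurd h (Nat.not_lt_zero _)
  | succ k ih =>
    intro H hHE hPhik hbound
    by_cases hart : ∀ a : V, ¬ IsArticulationPoint (underlying H) a
    · exact ⟨H, subset_rfl, hHE, hart, le_trans (Nat.le_add_right _ _) hbound⟩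
    · push_neg at hart
      obtain ⟨a, ha⟩ := hart
      obtain ⟨e, heE, hdec⟩ := step hHE a ha (hartE a)
      have hmono : ∀ b : V, ncomp (insert e H) b ≤ ncomp H b :=
        fun b => ncomp_mono (Finset.subset_insert _ _) b
      have hnea : Nonempty {v : V | v ≠ a} := by
        obtain ⟨b, hb⟩ := Fintype.exists_ne_of_one_lt_card (by omega) a
        exact ⟨⟨b, hb⟩⟩
      have hpos : 0 < ncomp (insert e H) a := ncomp_pos _ a hnea
      have hPhi' : Phi (insert e H) < Phi H := by
        refine Finset.sum_lt_sum (fun b _ => Nat.sub_le_sub_right (hmono b) 1)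
          ⟨a, Finset.mem_univ a, ?_⟩
        omega
      have hcard : (insert e H).card ≤ H.card + 1 := Finset.card_insert_le _ _
      obtain ⟨H'', h1, h2, h3, h4⟩ := ih (insert e H) (Finset.insert_subset heE hHE)
        (by omega) (by omega)
      exact ⟨H'', (Finset.subset_insert _ _).trans h1, h2, h3, h4⟩

end SBAux

/-- Every strongly biconnected directed graph on $n$ vertices has a strongly
biconnected spanning subgraph with at most $3(n-1)$ edges. -/
theorem stmt_5 {V : Type*} [Fintype V] (E : Finset (V × V))
    (hG : StronglyBiconnected E) :
    ∃ H ⊆ E, StronglyBiconnected H ∧ H.card ≤ 3 * (Fintype.card V - 1) := by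
  classical
  obtain ⟨hsc, hart⟩ := hG
  rcases Nat.lt_or_ge (Fintype.card V) 2 with hlt | hge
  · rcases (by omega : Fintype.card V = 0 ∨ Fintype.card V = 1) with h0 | h1
    · haveI : IsEmpty V := Fintype.card_eq_zero_iff.mp h0
      exact ⟨∅, Finset.empty_subset _,
        ⟨fun u v => isEmptyElim u, fun a => isEmptyElim a⟩, by simp⟩
    · exfalso
      haveI : Nonempty V := Fintype.card_pos_iff.mp (by omega)
      obtain ⟨a⟩ := ‹Nonempty V›
      apply hart a
      intro hconn
      obtain ⟨⟨v, hv⟩⟩ := hconn.nonempty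
      exact hv (Fintype.card_le_one_iff.mp (by omega) v a)
  · haveI : Nonempty V := Fintype.card_pos_iff.mp (by omega)
    obtain ⟨r⟩ := ‹Nonempty V›
    obtain ⟨Tout, hToutE, hToutc, hToutr⟩ := SBAux.exists_outtree E hsc r
    obtain ⟨Tin, hTinE, hTinc, hTinr⟩ := SBAux.exists_intree E hsc r
    set H₀ := Tout ∪ Tin with hH₀
    have hH₀E : H₀ ⊆ E := Finset.union_subset hToutE hTinE
    have hsc₀ : StronglyConnected H₀ := fun u v =>
      (SBAux.dpath_mono Finset.subset_union_right (hTinr u)).trans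
        (SBAux.dpath_mono Finset.subset_union_left (hToutr v))
    have hpre : (underlying Tout).Preconnected := fun u v =>
      (SBAux.reachable_underlying (hToutr u)).symm.trans
        (SBAux.reachable_underlying (hToutr v))
    have hkey : ∀ a : V, (SBAux.ncomp H₀ a - 1) + 1 ≤ (underlying Tout).degree a := by
      intro a
      have h1 : SBAux.ncomp H₀ a ≤ SBAux.ncomp Tout a :=
        SBAux.ncomp_mono Finset.subset_union_left a
      have h2 := SBAux.ncomp_le_degree Tout hpre a
      have h3 : 0 < SBAux.ncomp H₀ a := by
        obtain ⟨b, hb⟩ := Fintype.exists_ne_of_one_lt_card (by omega) a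
        exact SBAux.ncomp_pos _ a ⟨⟨b, hb⟩⟩
      omega
    have hsum : SBAux.Phi H₀ + Fintype.card V ≤ 2 * Tout.card := by
      have h1 : ∑ a : V, ((SBAux.ncomp H₀ a - 1) + 1) ≤
          ∑ a : V, (underlying Tout).degree a :=
        Finset.sum_le_sum (fun a _ => hkey a)
      rw [Finset.sum_add_distrib, Finset.sum_const, smul_eq_mul, mul_one] at h1
      have h2 := SimpleGraph.sum_degrees_eq_twice_card_edges (underlying Tout)
      have h3 := SBAux.underlying_edge_card Tout
      have h4 : (Finset.univ : Finset V).card = Fintype.card V := Finset.card_univ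
      unfold SBAux.Phi
      omega
    have hcard₀ : H₀.card ≤ Tout.card + Tin.card := Finset.card_union_le Tout Tin
    obtain ⟨H', hsub', hH'E, hart', hcard'⟩ :=
      SBAux.main_ind hart hge (SBAux.Phi H₀ + 1) H₀ hH₀E (by omega) (by omega)
    exact ⟨H', hH'E, ⟨fun u v => SBAux.dpath_mono hsub' (hsc₀ u v), hart'⟩, hcard'⟩
end

section
/- Let G=(V,E) be a strongly biconnected directed graph on a finite vertex set with n = |V| ≥ 3 vertices and no self-loops. Then G has a strongly biconnected spanning subgraph (V,H), H ⊆ E, with exactly n edges if and only if G has a Hamiltonian directed cycle, i.e., a directed cycle using edges of E that visits every vertex of V exactly once. -/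
section Aux
variable {V : Type*} [Fintype V]

lemma aux_dpath (e : ZMod (Fintype.card V) ≃ V) (H : Finset (V × V))
    (hH : ∀ i, (e i, e (i + 1)) ∈ H) (i : ZMod (Fintype.card V)) (m : ℕ) :
    DPath H (e i) (e (i + m)) := by
  induction m with
  | zero => simp only [Nat.cast_zero, add_zero]; exact Relation.ReflTransGen.refl
  | succ m ih =>
    have h1 : ((m + 1 : ℕ) : ZMod (Fintype.card V)) = (m : ZMod (Fintype.card V)) + 1 := by
      push_cast; ring
    rw [h1, ← add_assoc]
    exact ih.tail (hH _)

lemma aux_sc [NeZero (Fintype.card V)] (e : ZMod (Fintype.card V) ≃ V) (H : Finset (V × V))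
    (hH : ∀ i, (e i, e (i + 1)) ∈ H) : StronglyConnected H := by
  intro u v
  have h := aux_dpath e H hH (e.symm u) ((e.symm v - e.symm u).val)
  rw [ZMod.natCast_zmod_val] at h
  simpa using h

lemma aux_noart (hn : 3 ≤ Fintype.card V) (e : ZMod (Fintype.card V) ≃ V) (H : Finset (V × V))
    (hH : ∀ i, (e i, e (i + 1)) ∈ H) (a : V) :
    ((underlying H).induce {v : V | v ≠ a}).Connected := by
  haveI : NeZero (Fintype.card V) := ⟨by omega⟩
  haveI : Fact (1 < Fintype.card V) := ⟨by omega⟩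

  set ia := e.symm a with hia
  have hne : ∀ k : ℕ, 1 ≤ k → k < Fintype.card V → e (ia + (k : ZMod (Fintype.card V))) ∈ {v : V | v ≠ a} := by
    intro k h1 h2
    simp only [Set.mem_setOf_eq]
    intro hEq
    have h3 : ia + (k : ZMod (Fintype.card V)) = ia := by
      have := congrArg e.symm hEq
      simpa [hia] using this
    have hk0 : (k : ZMod (Fintype.card V)) = 0 := by
      have := add_eq_left.mp h3
      exact this
    have := (ZMod.natCast_eq_zero_iff k (Fintype.card V)).mp hk0
    have := Nat.le_of_dvd (by omega) this
    omega
  have hadj : ∀ j : ZMod (Fintype.card V), (underlying H).Adj (e j) (e (j + 1)) := by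
    intro j
    refine ⟨fun hEq => ?_, Or.inl (hH j)⟩
    have h4 : j = j + 1 := e.injective hEq
    have h5 : (1 : ZMod (Fintype.card V)) = 0 := (left_eq_add.mp h4)
    exact one_ne_zero h5
  have pf1 : e (ia + 1) ∈ {v : V | v ≠ a} := by
    have := hne 1 le_rfl (by omega)
    simpa using this
  have key : ∀ w (hw : w ∈ {v : V | v ≠ a}),
      ((underlying H).induce {v : V | v ≠ a}).Reachable ⟨e (ia + 1), pf1⟩ ⟨w, hw⟩ := by
    have main : ∀ k : ℕ, 1 ≤ k → k < Fintype.card V → ∀ (h : e (ia + (k : ZMod (Fintype.card V))) ∈ {v : V | v ≠ a}),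
        ((underlying H).induce {v : V | v ≠ a}).Reachable ⟨e (ia + 1), pf1⟩
          ⟨e (ia + (k : ZMod (Fintype.card V))), h⟩ := by
      intro k
      induction k with
      | zero => omega
      | succ k ih =>
        intro h1 h2 h
        rcases Nat.lt_or_ge 1 (k + 1) with hk1 | hk1
        · have hk : k < Fintype.card V := by omega
          have hmem := hne k (by omega) hk
          refine (ih (by omega) hk hmem).trans ?_
          apply SimpleGraph.Adj.reachable
          have hadj' : (underlying H).Adj (e (ia + (k : ZMod (Fintype.card V)))) (e (ia + ((k + 1 : ℕ) : ZMod (Fintype.card V)))) := by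
            have := hadj (ia + (k : ZMod (Fintype.card V)))
            have hcast : ia + ((k + 1 : ℕ) : ZMod (Fintype.card V)) = (ia + (k : ZMod (Fintype.card V))) + 1 := by
              push_cast; ring
            rw [hcast]
            exact this
          exact hadj'
        · have hk0 : k = 0 := by omega
          subst hk0
          have heq : (⟨e (ia + ((0 + 1 : ℕ) : ZMod (Fintype.card V))), h⟩ :
              {v : V // v ∈ {v : V | v ≠ a}}) = ⟨e (ia + 1), pf1⟩ := by
            apply Subtype.ext
            norm_num
          rw [heq]
    intro w hw
    set k := (e.symm w - ia).val with hk
    have hk1 : ((k : ℕ) : ZMod (Fintype.card V)) = e.symm w - ia := ZMod.natCast_zmod_val _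
    have hw' : e (ia + (k : ZMod (Fintype.card V))) = w := by
      rw [hk1]
      have : ia + (e.symm w - ia) = e.symm w := by ring
      rw [this, e.apply_symm_apply]
    have hklt : k < Fintype.card V := ZMod.val_lt _
    have hkge : 1 ≤ k := by
      by_contra hc
      have hk0 : k = 0 := by omega
      have : e.symm w - ia = 0 := by
        rw [← hk1, hk0]; norm_num
      have : e.symm w = ia := by
        have := sub_eq_zero.mp this
        exact this
      have : w = a := by
        have := congrArg e this
        simpa [hia] using this
      exact hw this
    have hmem : e (ia + (k : ZMod (Fintype.card V))) ∈ {v : V | v ≠ a} := by rw [hw']; exact hw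
    have := main k hkge hklt hmem
    have heq2 : (⟨e (ia + (k : ZMod (Fintype.card V))), hmem⟩ : {v : V // v ∈ {v : V | v ≠ a}}) = ⟨w, hw⟩ :=
      Subtype.ext hw'
    rwa [heq2] at this
  rw [SimpleGraph.connected_iff]
  constructor
  · rintro ⟨u, hu⟩ ⟨v, hv⟩
    exact (key u hu).symm.trans (key v hv)
  · exact ⟨⟨e (ia + 1), pf1⟩⟩



lemma aux_forward {V : Type*} [Fintype V] (hn : 3 ≤ Fintype.card V)
    (H : Finset (V × V)) (hSC : StronglyConnected H)
    (hcard : H.card = Fintype.card V) :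
    ∃ e : ZMod (Fintype.card V) ≃ V, ∀ i, (e i, e (i + 1)) ∈ H := by
  classical
  haveI : NeZero (Fintype.card V) := ⟨by omega⟩
  haveI : Fact (1 < Fintype.card V) := ⟨by omega⟩
  haveI : Nontrivial V := Fintype.one_lt_card_iff_nontrivial.mp (by omega)
  -- every vertex has an out-edge
  have hout : ∀ u : V, ∃ w, (u, w) ∈ H := by
    intro u
    obtain ⟨v, hv⟩ := exists_ne u
    rcases (hSC u v).cases_head with h | ⟨c, hc, _⟩
    · exact absurd h.symm hv
    · exact ⟨c, hc⟩
  have hin : ∀ w : V, ∃ u, (u, w) ∈ H := by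
    intro w
    obtain ⟨v, hv⟩ := exists_ne w
    rcases (hSC v w).cases_tail with h | ⟨c, _, hc⟩
    · exact absurd h.symm hv
    · exact ⟨c, hc⟩
  -- out-fibers each have exactly one element
  have hsum1 : ∑ u : V, (H.filter (fun p => p.1 = u)).card = H.card :=
    (Finset.card_eq_sum_card_fiberwise (fun p _ => Finset.mem_univ p.1)).symm
  have hone : ∀ u : V, (H.filter (fun p => p.1 = u)).card = 1 := by
    have hle : ∀ u ∈ Finset.univ, 1 ≤ (H.filter (fun p => p.1 = u)).card := by
      intro u _
      obtain ⟨w, hw⟩ := hout u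
      exact Finset.card_pos.mpr ⟨(u, w), Finset.mem_filter.mpr ⟨hw, rfl⟩⟩
    have heq : ∑ _u : V, (1 : ℕ) = ∑ u : V, (H.filter (fun p => p.1 = u)).card := by
      rw [hsum1, hcard]; simp
    intro u
    exact ((Finset.sum_eq_sum_iff_of_le hle).mp heq u (Finset.mem_univ u)).symm
  have hsum2 : ∑ w : V, (H.filter (fun p => p.2 = w)).card = H.card :=
    (Finset.card_eq_sum_card_fiberwise (fun p _ => Finset.mem_univ p.2)).symm
  have hone2 : ∀ w : V, (H.filter (fun p => p.2 = w)).card = 1 := by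
    have hle : ∀ w ∈ Finset.univ, 1 ≤ (H.filter (fun p => p.2 = w)).card := by
      intro w _
      obtain ⟨u, hu⟩ := hin w
      exact Finset.card_pos.mpr ⟨(u, w), Finset.mem_filter.mpr ⟨hu, rfl⟩⟩
    have heq : ∑ _w : V, (1 : ℕ) = ∑ w : V, (H.filter (fun p => p.2 = w)).card := by
      rw [hsum2, hcard]; simp
    intro w
    exact ((Finset.sum_eq_sum_iff_of_le hle).mp heq w (Finset.mem_univ w)).symm
  -- the successor function
  set σ : V → V := fun u => Classical.choose (hout u) with hσdef
  have hσ : ∀ u, (u, σ u) ∈ H := fun u => Classical.choose_spec (hout u)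
  have huniq : ∀ u w, (u, w) ∈ H → w = σ u := by
    intro u w hw
    have h1 : ((u, w) : V × V) ∈ H.filter (fun p => p.1 = u) := Finset.mem_filter.mpr ⟨hw, rfl⟩
    have h2 : ((u, σ u) : V × V) ∈ H.filter (fun p => p.1 = u) :=
      Finset.mem_filter.mpr ⟨hσ u, rfl⟩
    have := Finset.card_le_one.mp (le_of_eq (hone u)) _ h1 _ h2
    exact (Prod.mk.injEq _ _ _ _ ▸ this).2
  have hinj : Function.Injective σ := by
    intro u u' h
    have h1 : ((u, σ u) : V × V) ∈ H.filter (fun p => p.2 = σ u) :=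
      Finset.mem_filter.mpr ⟨hσ u, rfl⟩
    have h2 : ((u', σ u) : V × V) ∈ H.filter (fun p => p.2 = σ u) :=
      Finset.mem_filter.mpr ⟨by rw [h]; exact hσ u', rfl⟩
    have := Finset.card_le_one.mp (le_of_eq (hone2 (σ u))) _ h1 _ h2
    exact (Prod.mk.injEq _ _ _ _ ▸ this).1
  have hsurj : Function.Surjective σ := Finite.injective_iff_surjective.mp hinj
  -- reachability = iterates
  have hreach : ∀ u v : V, DPath H u v → ∃ m : ℕ, σ^[m] u = v := by
    intro u v h
    induction h with
    | refl => exact ⟨0, rfl⟩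
    | tail h1 h2 ih =>
      obtain ⟨m, rfl⟩ := ih
      exact ⟨m + 1, by rw [Function.iterate_succ_apply']; exact (huniq _ _ h2).symm⟩
  obtain ⟨v0⟩ : Nonempty V := inferInstance
  have F1 : ∀ v : V, ∃ m : ℕ, σ^[m] v0 = v := fun v => hreach v0 v (hSC v0 v)
  have F2 : ∃ p : ℕ, 0 < p ∧ σ^[p] v0 = v0 := by
    obtain ⟨u, hu⟩ := hsurj v0
    obtain ⟨m, hm⟩ := F1 u
    exact ⟨m + 1, Nat.succ_pos m, by rw [Function.iterate_succ_apply', hm, hu]⟩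
  set d := Nat.find F2 with hd
  have hdspec : 0 < d ∧ σ^[d] v0 = v0 := Nat.find_spec F2
  have hdmin : ∀ q < d, ¬ (0 < q ∧ σ^[q] v0 = v0) := fun q hq => Nat.find_min F2 hq
  have hdq : ∀ q : ℕ, σ^[d * q] v0 = v0 := by
    intro q
    induction q with
    | zero => simp
    | succ q ih =>
      have : d * (q + 1) = d + d * q := by ring
      rw [this, Function.iterate_add_apply, ih, hdspec.2]
  have hper : ∀ m : ℕ, σ^[m % d] v0 = σ^[m] v0 := by
    intro m
    conv_rhs => rw [← Nat.mod_add_div m d, Function.iterate_add_apply, hdq]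
  have hinjlt : ∀ i j : ℕ, i ≤ j → j < d → σ^[i] v0 = σ^[j] v0 → i = j := by
    intro i j hij hjd h
    have h2 : σ^[i] v0 = σ^[i] (σ^[j - i] v0) := by
      rw [← Function.iterate_add_apply]
      rw [show i + (j - i) = j by omega]
      exact h
    have h3 : v0 = σ^[j - i] v0 := (hinj.iterate i) h2
    by_contra hne
    exact hdmin (j - i) (by omega) ⟨by omega, h3.symm⟩
  -- d = card V
  have hdcard : d = Fintype.card V := by
    have hbij : Function.Bijective (fun i : Fin d => σ^[i.1] v0) := by
      constructor
      · intro i j h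
        rcases le_or_gt i.1 j.1 with hle | hlt
        · exact Fin.ext (hinjlt i.1 j.1 hle j.2 h)
        · exact (Fin.ext (hinjlt j.1 i.1 (le_of_lt hlt) i.2 h.symm)).symm
      · intro v
        obtain ⟨m, hm⟩ := F1 v
        refine ⟨⟨m % d, Nat.mod_lt m hdspec.1⟩, ?_⟩
        show σ^[m % d] v0 = v
        rw [hper]; exact hm
    have := Fintype.card_of_bijective hbij
    simpa using this
  -- build the equiv
  have hper' : ∀ m : ℕ, σ^[m % Fintype.card V] v0 = σ^[m] v0 := by
    intro m; rw [← hdcard]; exact hper m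
  have hbij2 : Function.Bijective (fun i : ZMod (Fintype.card V) => σ^[i.val] v0) := by
    constructor
    · intro i j h
      have hi : i.val < d := by rw [hdcard]; exact ZMod.val_lt i
      have hj : j.val < d := by rw [hdcard]; exact ZMod.val_lt j
      have : i.val = j.val := by
        rcases le_or_gt i.val j.val with hle | hlt
        · exact hinjlt _ _ hle hj h
        · exact (hinjlt _ _ (le_of_lt hlt) hi h.symm).symm
      exact ZMod.val_injective _ this
    · intro v
      obtain ⟨m, hm⟩ := F1 v
      refine ⟨(m : ZMod (Fintype.card V)), ?_⟩
      show σ^[((m : ZMod (Fintype.card V))).val] v0 = v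
      rw [ZMod.val_natCast, hper']
      exact hm
  refine ⟨Equiv.ofBijective _ hbij2, ?_⟩
  intro i
  have he1 : Equiv.ofBijective _ hbij2 i = σ^[i.val] v0 := rfl
  have he2 : Equiv.ofBijective _ hbij2 (i + 1) = σ^[(i + 1).val] v0 := rfl
  have hv1 : (i + 1).val = (i.val + 1) % Fintype.card V := by
    rw [ZMod.val_add, ZMod.val_one]
  have he3 : Equiv.ofBijective _ hbij2 (i + 1) = σ (σ^[i.val] v0) := by
    rw [he2, hv1, hper', Function.iterate_succ_apply']
  rw [he1, he3]
  exact hσ _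

end Aux

/-- A loopless strongly biconnected directed graph on $n ≥ 3$ vertices has a
strongly biconnected spanning subgraph with exactly $n$ edges if and only if
it has a Hamiltonian directed cycle. -/
theorem stmt_8 {V : Type*} [Fintype V] (hn : 3 ≤ Fintype.card V)
    (E : Finset (V × V)) (hloop : ∀ v : V, (v, v) ∉ E)
    (hG : StronglyBiconnected E) :
    (∃ H ⊆ E, StronglyBiconnected H ∧ H.card = Fintype.card V) ↔
      (∃ e : ZMod (Fintype.card V) ≃ V, ∀ i, (e i, e (i + 1)) ∈ E) := by
  classical
  haveI : NeZero (Fintype.card V) := ⟨by omega⟩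
  constructor
  · rintro ⟨H, hHE, ⟨hSC, _⟩, hcard⟩
    obtain ⟨e, he⟩ := aux_forward hn H hSC hcard
    exact ⟨e, fun i => hHE (he i)⟩
  · rintro ⟨e, he⟩
    refine ⟨Finset.image (fun i => (e i, e (i + 1))) Finset.univ, ?_, ⟨?_, ?_⟩, ?_⟩
    · intro p hp
      simp only [Finset.mem_image, Finset.mem_univ, true_and] at hp
      obtain ⟨i, rfl⟩ := hp
      exact he i
    · exact aux_sc e _ (fun i => Finset.mem_image_of_mem _ (Finset.mem_univ i))
    · intro a ha
      exact ha (aux_noart hn e _ (fun i => Finset.mem_image_of_mem _ (Finset.mem_univ i)) a)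
    · rw [Finset.card_image_of_injective _
        (fun i j h => e.injective (congrArg Prod.fst h))]
      simp [ZMod.card]
end
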